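/- Let q be a prime power, k ≥ 2, n = (2r+1)k with r ≥ 2, ξ primitive in F_{q^k}, γ a root of an irreducible polynomial of degree 2r+1 over F_{q^k}, δ_1, ..., δ_r ∈ F_{q^k}^*, θ ∈ {1, ξ, ..., ξ^{q-2}}, and p, l positive integers with (p=1 and 1 ≤ l ≤ r) or (p ≥ 2 and r/(p+1) < l ≤ r/p). Then U = { u + Σ_{a=1}^{p}(θ u^q + u) δ_{al} γ^{al} + Σ_{b=1, b∉{l,...,pl}}^{r} u δ_b γ^b : u ∈ F_{q^k} } is a Sidon space. -/

import Mathlib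

open Module

lemma aux_quad {M : Type*} [Field M] {A B A' B' : M} (hS : A + B = A' + B')
    (hP : A * B = A' * B') : A' = A ∨ A' = B := by
  have h : (A' - A) * (A' - B) = 0 := by linear_combination (-A') * hS + hP
  rcases mul_eq_zero.mp h with h | h
  · exact Or.inl (sub_eq_zero.mp h)
  · exact Or.inr (sub_eq_zero.mp h)


lemma aux_fixed (K M : Type*) [Field K] [Fintype K] [Field M] [Algebra K M]
    (x : M) (hx : x ^ Fintype.card K = x) : ∃ c : K, algebraMap K M c = x := by
  classical
  set c := Fintype.card K with hc
  have hc2 : 2 ≤ c := Fintype.one_lt_card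
  set f : Polynomial M := Polynomial.X ^ c - Polynomial.X with hf
  have hfdeg : f.natDegree = c := by
    rw [hf, Polynomial.natDegree_sub_eq_left_of_natDegree_lt] <;>
      simp [Polynomial.natDegree_X_pow] <;> omega
  have hf0 : f ≠ 0 := by
    intro h
    rw [h] at hfdeg
    simp at hfdeg
    omega
  set T : Finset M := Finset.univ.image (algebraMap K M) with hT
  have hTcard : T.card = c := by
    rw [hT, Finset.card_image_of_injective _ (algebraMap K M).injective, Finset.card_univ]
  by_contra hnot
  push_neg at hnot
  have hxT : x ∉ T := by
    intro hxT
    rw [hT] at hxT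
    obtain ⟨c₀, _, hc₀⟩ := Finset.mem_image.mp hxT
    exact hnot c₀ hc₀
  have hsub : insert x T ⊆ f.roots.toFinset := by
    intro y hy
    rw [Multiset.mem_toFinset, Polynomial.mem_roots hf0]
    rcases Finset.mem_insert.mp hy with rfl | hyT
    · simp [hf, Polynomial.IsRoot, sub_eq_zero, hx]
    · rw [hT] at hyT
      obtain ⟨c₀, _, rfl⟩ := Finset.mem_image.mp hyT
      simp [hf, Polynomial.IsRoot, sub_eq_zero, ← map_pow, hc, FiniteField.pow_card]
  have h1 : (insert x T).card = c + 1 := by rw [Finset.card_insert_of_notMem hxT, hTcard]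
  have h2 : (insert x T).card ≤ f.roots.toFinset.card := Finset.card_le_card hsub
  have h3 : f.roots.toFinset.card ≤ Multiset.card f.roots := Multiset.toFinset_card_le _
  have h4 := Polynomial.card_roots' f
  omega

lemma aux_frob {q : ℕ} (hq : IsPrimePow q) (M : Type*)
    [Field M] [Fintype M] {k : ℕ} (hM : Fintype.card M = q ^ k) (x y : M) :
    (x + y) ^ q = x ^ q + y ^ q := by
  obtain ⟨P, E, hPp, hE, hq'⟩ := hq
  have hPprime : Nat.Prime P := Nat.prime_iff.mpr hPp
  haveI : Fact (Nat.Prime (ringChar M)) := ⟨CharP.char_is_prime M (ringChar M)⟩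
  obtain ⟨m, _, hm⟩ := FiniteField.card M (ringChar M)
  have hcard : P ^ (E * k) = (ringChar M) ^ (m : ℕ) := by
    rw [pow_mul, hq', ← hm, hM]
  have hPchar : P = ringChar M := by
    have hdvd : ringChar M ∣ P ^ (E * k) := by
      rw [hcard]
      exact dvd_pow_self _ (by positivity)
    have := (Nat.Prime.dvd_of_dvd_pow (Fact.out) hdvd)
    exact ((Nat.prime_dvd_prime_iff_eq Fact.out hPprime).mp this).symm
  haveI : Fact (Nat.Prime P) := ⟨hPprime⟩
  haveI : CharP M P := hPchar ▸ ringChar.charP M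
  rw [← hq']
  exact add_pow_char_pow x y P E

set_option maxHeartbeats 1000000 in
/-- The subspace
`U = { u + Σ_{a=1}^{p}(θ u^q + u) δ_{al} γ^{al} + Σ_{b=1, b∉{l,...,pl}}^{r} u δ_b γ^b : u ∈ F_{q^k} }`
is a Sidon space. -/
theorem stmt_4 (q k n r p l : ℕ) (hq : IsPrimePow q) (hk : 2 ≤ k) (hr : 2 ≤ r)
    (hn : n = (2 * r + 1) * k)
    (K M L : Type*) [Field K] [Fintype K] [Field M] [Fintype M] [Field L] [Fintype L]
    [Algebra K M] [Algebra M L] [Algebra K L] [IsScalarTower K M L]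
    (hK : Fintype.card K = q) (hM : Fintype.card M = q ^ k) (hL : Fintype.card L = q ^ n)
    (ξ : M) (hξ : orderOf ξ = q ^ k - 1)
    (fpoly : Polynomial M) (hirr : Irreducible fpoly) (hdeg : fpoly.natDegree = 2 * r + 1)
    (γ : L) (hroot : Polynomial.aeval γ fpoly = 0)
    (δ : ℕ → M) (hδ : ∀ i, 1 ≤ i → i ≤ r → δ i ≠ 0)
    (θ : M) (hθ : ∃ t : ℕ, t ≤ q - 2 ∧ θ = ξ ^ t)
    (hpl : (p = 1 ∧ 1 ≤ l ∧ l ≤ r) ∨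
           (2 ≤ p ∧ (r : ℚ) / (p + 1) < l ∧ (l : ℚ) ≤ (r : ℚ) / p)) :
    ∃ U : Submodule K L,
      (U : Set L) = Set.range (fun u : M =>
        algebraMap M L u
        + ∑ a ∈ Finset.Icc 1 p,
            algebraMap M L ((θ * u ^ q + u) * δ (a * l)) * γ ^ (a * l)
        + ∑ b ∈ (Finset.Icc 1 r).filter
            (fun b => b ∉ (Finset.Icc 1 p).image (fun a => a * l)),
            algebraMap M L (u * δ b) * γ ^ b) ∧
      ∀ a ∈ U, ∀ b ∈ U, ∀ c ∈ U, ∀ d ∈ U,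
        a ≠ 0 → b ≠ 0 → c ≠ 0 → d ≠ 0 → a * b = c * d →
        ({Submodule.span K {a}, Submodule.span K {b}} : Set (Submodule K L)) =
          {Submodule.span K {c}, Submodule.span K {d}} := by
  classical
  -- basic arithmetic facts
  have hq2 : 2 ≤ q := hq.two_le
  have hp1 : 1 ≤ p := by
    rcases hpl with ⟨h1, _, _⟩ | ⟨h1, _, _⟩ <;> omega
  have hl1 : 1 ≤ l := by
    rcases hpl with ⟨_, h2, _⟩ | ⟨hp2, h2, h3⟩
    · exact h2
    · by_contra h
      have : l = 0 := by omega
      subst this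
      have : (0:ℚ) < (r:ℚ) / (p+1) := by positivity
      simp at h2
      linarith
  have hplr : p * l ≤ r := by
    rcases hpl with ⟨h1, _, h3⟩ | ⟨hp2, h2, h3⟩
    · subst h1; simpa using h3
    · have hp0 : (0:ℚ) < (p:ℚ) := by positivity
      rw [le_div_iff₀ hp0] at h3
      have : ((l * p : ℕ) : ℚ) ≤ (r : ℚ) := by push_cast; linarith
      exact_mod_cast (by rw [mul_comm] at this; exact_mod_cast this : ((p * l : ℕ) : ℚ) ≤ (r:ℚ))
  have hlr : l ≤ r := by
    have : l ≤ p * l := Nat.le_mul_of_pos_left l (by omega)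
    omega
  -- theta and delta nonzero
  have hθ0 : θ ≠ 0 := by
    obtain ⟨t, _, rfl⟩ := hθ
    have hξ0 : ξ ≠ 0 := by
      intro h
      have := pow_orderOf_eq_one ξ
      rw [hξ, h] at this
      have hqk : q ^ k - 1 ≠ 0 := by
        have h1 : 2 ^ 2 ≤ q ^ 2 := Nat.pow_le_pow_left hq2 2
        have h2 : q ^ 2 ≤ q ^ k := Nat.pow_le_pow_right (by omega) hk
        omega
      rw [zero_pow hqk] at this
      exact zero_ne_one this
    exact pow_ne_zero t hξ0
  have hδl0 : δ l ≠ 0 := hδ l hl1 hlr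
  -- Frobenius
  have hfrob : ∀ x y : M, (x + y) ^ q = x ^ q + y ^ q := fun x y => aux_frob hq M hM x y
  have hfrobK : ∀ c : K, (algebraMap K M c) ^ q = algebraMap K M c := by
    intro c
    rw [← map_pow, ← hK, FiniteField.pow_card]
  -- the linear map
  set BS : Finset ℕ := (Finset.Icc 1 r).filter
      (fun b => b ∉ (Finset.Icc 1 p).image (fun a => a * l)) with hBS
  set Φ : M → L := fun u =>
    algebraMap M L u
    + ∑ a ∈ Finset.Icc 1 p,
        algebraMap M L ((θ * u ^ q + u) * δ (a * l)) * γ ^ (a * l)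
    + ∑ b ∈ BS, algebraMap M L (u * δ b) * γ ^ b with hΦ
  have hmapadd : ∀ x y : M, Φ (x + y) = Φ x + Φ y := by
    intro x y
    have h1 : ∀ a : ℕ, algebraMap M L ((θ * (x + y) ^ q + (x + y)) * δ (a * l)) * γ ^ (a * l)
        = algebraMap M L ((θ * x ^ q + x) * δ (a * l)) * γ ^ (a * l)
          + algebraMap M L ((θ * y ^ q + y) * δ (a * l)) * γ ^ (a * l) := by
      intro a
      rw [show (θ * (x + y) ^ q + (x + y)) * δ (a * l)
          = (θ * x ^ q + x) * δ (a * l) + (θ * y ^ q + y) * δ (a * l) by rw [hfrob]; ring,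
        map_add, add_mul]
    have h2 : ∀ b : ℕ, algebraMap M L ((x + y) * δ b) * γ ^ b
        = algebraMap M L (x * δ b) * γ ^ b + algebraMap M L (y * δ b) * γ ^ b := by
      intro b
      rw [show (x + y) * δ b = x * δ b + y * δ b by ring, map_add, add_mul]
    simp only [hΦ, h1, h2, map_add, Finset.sum_add_distrib]
    ring
  have hmapsmul : ∀ (c : K) (x : M), Φ (c • x) = c • Φ x := by
    intro c x
    have hsm : c • x = algebraMap K M c * x := Algebra.smul_def c x
    have hsm2 : ∀ z : L, c • z = algebraMap K L c * z := fun z => Algebra.smul_def c z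
    have hpow : (algebraMap K M c * x) ^ q = algebraMap K M c * x ^ q := by
      rw [mul_pow, hfrobK]
    have htower : ∀ m : M, algebraMap M L (algebraMap K M c * m)
        = algebraMap K L c * algebraMap M L m := by
      intro m; rw [map_mul, ← IsScalarTower.algebraMap_apply]
    have h1 : ∀ a : ℕ, (θ * (algebraMap K M c * x ^ q) + algebraMap K M c * x) * δ a
        = algebraMap K M c * ((θ * x ^ q + x) * δ a) := by intro a; ring
    have h2 : ∀ b : ℕ, (algebraMap K M c * x) * δ b
        = algebraMap K M c * (x * δ b) := by intro b; ring
    simp only [hΦ, hsm, hsm2, hpow, h1, h2, htower, mul_assoc, ← Finset.mul_sum]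
    ring
  set φ : M →ₗ[K] L :=
    { toFun := Φ, map_add' := hmapadd, map_smul' := hmapsmul } with hφ
  refine ⟨LinearMap.range φ, ?_, ?_⟩
  · rfl
  -- the polynomials
  set Pm : M → Polynomial M := fun u =>
    Polynomial.C u
    + ∑ a ∈ Finset.Icc 1 p,
        Polynomial.C ((θ * u ^ q + u) * δ (a * l)) * Polynomial.X ^ (a * l)
    + ∑ b ∈ BS, Polynomial.C (u * δ b) * Polynomial.X ^ b with hPm
  have hPφ : ∀ u, Polynomial.aeval γ (Pm u) = φ u := by
    intro u
    simp only [hPm, hφ, hΦ, map_add, map_sum, map_mul, map_pow,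
      Polynomial.aeval_C, Polynomial.aeval_X, LinearMap.coe_mk, AddHom.coe_mk]
  have hdegP : ∀ u, (Pm u).natDegree ≤ r := by
    intro u
    refine (Polynomial.natDegree_add_le _ _).trans (max_le ((Polynomial.natDegree_add_le _ _).trans (max_le ?_ ?_)) ?_)
    · simp
    · refine Polynomial.natDegree_sum_le_of_forall_le _ _ (fun a ha => ?_)
      refine (Polynomial.natDegree_C_mul_X_pow_le _ _).trans ?_
      have := (Finset.mem_Icc.mp ha).2
      calc a * l ≤ p * l := Nat.mul_le_mul_right l this
        _ ≤ r := hplr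
    · refine Polynomial.natDegree_sum_le_of_forall_le _ _ (fun b hb => ?_)
      refine (Polynomial.natDegree_C_mul_X_pow_le _ _).trans ?_
      have := Finset.mem_filter.mp hb
      exact (Finset.mem_Icc.mp this.1).2
  -- low-degree polynomials with root γ vanish
  haveI : Finite L := Finite.of_fintype L
  haveI : Module.Finite M L := Module.Finite.of_finite
  have hint : IsIntegral M γ := IsIntegral.of_finite M γ
  have hmpdeg : (minpoly M γ).natDegree = 2 * r + 1 := by
    obtain ⟨cpoly, hcp⟩ := minpoly.dvd M γ hroot
    rcases hirr.isUnit_or_isUnit hcp with h | h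
    · exact absurd h (Polynomial.not_isUnit_of_natDegree_pos _ (minpoly.natDegree_pos hint))
    · have hc0 : cpoly ≠ 0 := h.ne_zero
      have hm0 : minpoly M γ ≠ 0 := minpoly.ne_zero hint
      have := Polynomial.natDegree_mul hm0 hc0
      rw [Polynomial.natDegree_eq_zero_of_isUnit h] at this
      rw [← hdeg, hcp, this]
      omega
  have hmono : ∀ Q : Polynomial M, Q.natDegree ≤ 2 * r → Polynomial.aeval γ Q = 0 → Q = 0 := by
    intro Q hQd hQ0
    by_contra hne
    have h1 := Polynomial.natDegree_le_of_dvd (minpoly.dvd M γ hQ0) hne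
    omega
  -- the coefficients of Pm
  have himl : l ∈ (Finset.Icc 1 p).image (fun a => a * l) :=
    Finset.mem_image.mpr ⟨1, Finset.mem_Icc.mpr ⟨le_refl 1, hp1⟩, one_mul l⟩
  have hcoeff0 : ∀ u, (Pm u).coeff 0 = u := by
    intro u
    simp only [hPm, Polynomial.coeff_add, Polynomial.finset_sum_coeff,
      Polynomial.coeff_C_mul, Polynomial.coeff_X_pow, Polynomial.coeff_C_zero]
    rw [Finset.sum_eq_zero (fun a ha => by
        have h1 := (Finset.mem_Icc.mp ha).1
        have h2 : a * l ≠ 0 := Nat.mul_ne_zero (by omega) (by omega)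
        rw [if_neg (show ¬ (0:ℕ) = a * l by omega), mul_zero]),
      Finset.sum_eq_zero (fun b hb => by
        have h1 := (Finset.mem_Icc.mp (Finset.mem_filter.mp hb).1).1
        rw [if_neg (show ¬ (0:ℕ) = b by omega), mul_zero])]
    ring
  have hcoeffl : ∀ u, (Pm u).coeff l = (θ * u ^ q + u) * δ l := by
    intro u
    simp only [hPm, Polynomial.coeff_add, Polynomial.finset_sum_coeff,
      Polynomial.coeff_C_mul, Polynomial.coeff_X_pow, Polynomial.coeff_C]
    rw [if_neg (show ¬ l = 0 by omega),
      Finset.sum_eq_single_of_mem 1 (Finset.mem_Icc.mpr ⟨le_refl 1, hp1⟩) (fun a ha hane => by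
        have h2 : a * l ≠ l := by
          intro h
          exact hane (Nat.eq_of_mul_eq_mul_right (show 0 < l by omega) (by rw [h, one_mul]))
        rw [if_neg (show ¬ l = a * l from fun h => h2 h.symm), mul_zero]),
      Finset.sum_eq_zero (fun b hb => by
        have h1 := (Finset.mem_filter.mp hb).2
        have h2 : b ≠ l := fun h => h1 (h ▸ himl)
        rw [if_neg (show ¬ l = b from fun h => h2 h.symm), mul_zero])]
    rw [one_mul, if_pos rfl, mul_one]
    ring
  have hcoeffmid : ∀ u i, 1 ≤ i → i < l → (Pm u).coeff i = u * δ i := by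
    intro u i hi1 hil
    have himem : i ∈ BS := by
      rw [hBS, Finset.mem_filter]
      refine ⟨Finset.mem_Icc.mpr ⟨hi1, by omega⟩, ?_⟩
      intro him
      obtain ⟨a, ha, hai⟩ := Finset.mem_image.mp him
      have h1 := (Finset.mem_Icc.mp ha).1
      have : l ≤ a * l := Nat.le_mul_of_pos_left l (by omega)
      omega
    simp only [hPm, Polynomial.coeff_add, Polynomial.finset_sum_coeff,
      Polynomial.coeff_C_mul, Polynomial.coeff_X_pow, Polynomial.coeff_C]
    rw [if_neg (show ¬ i = 0 by omega),
      Finset.sum_eq_zero (fun a ha => by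
        have h1 := (Finset.mem_Icc.mp ha).1
        have h2 : l ≤ a * l := Nat.le_mul_of_pos_left l (by omega)
        rw [if_neg (show ¬ i = a * l by omega), mul_zero]),
      Finset.sum_eq_single_of_mem i himem (fun b hb hbne => by
        rw [if_neg (show ¬ i = b from fun h => hbne h.symm), mul_zero])]
    rw [if_pos rfl, mul_one]
    ring
  -- coefficient of the product at l
  set S : M := ∑ i ∈ Finset.Ioo 0 l, δ i * δ (l - i) with hS
  have hcoefflmul : ∀ u v : M, (Pm u * Pm v).coeff l =
      ((θ * u ^ q + u) * δ l) * v + u * ((θ * v ^ q + v) * δ l) + (u * v) * S := by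
    intro u v
    rw [Polynomial.coeff_mul, Finset.Nat.sum_antidiagonal_eq_sum_range_succ_mk]
    have hsplit : Finset.range (l + 1) = insert 0 (insert l (Finset.Ioo 0 l)) := by
      ext i
      simp only [Finset.mem_range, Finset.mem_insert, Finset.mem_Ioo]
      omega
    rw [hsplit, Finset.sum_insert (by simp; omega), Finset.sum_insert (by simp)]
    have hmid : ∑ i ∈ Finset.Ioo 0 l, (Pm u).coeff i * (Pm v).coeff (l - i)
        = (u * v) * S := by
      rw [hS, Finset.mul_sum]
      refine Finset.sum_congr rfl (fun i hi => ?_)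
      have hi' := Finset.mem_Ioo.mp hi
      rw [hcoeffmid u i (by omega) hi'.2, hcoeffmid v (l - i) (by omega) (by omega)]
      ring
    rw [hmid, Nat.sub_zero, Nat.sub_self, hcoeff0, hcoeffl, hcoeff0, hcoeffl]
    ring
  -- main argument
  intro e1 he1 e2 he2 e3 he3 e4 he4 hne1 hne2 hne3 hne4 heq
  obtain ⟨u, rfl⟩ := LinearMap.mem_range.mp he1
  obtain ⟨v, rfl⟩ := LinearMap.mem_range.mp he2
  obtain ⟨w, rfl⟩ := LinearMap.mem_range.mp he3
  obtain ⟨x, rfl⟩ := LinearMap.mem_range.mp he4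
  have hu : u ≠ 0 := fun h => hne1 (by rw [h, map_zero])
  have hv : v ≠ 0 := fun h => hne2 (by rw [h, map_zero])
  have hw : w ≠ 0 := fun h => hne3 (by rw [h, map_zero])
  have hx : x ≠ 0 := fun h => hne4 (by rw [h, map_zero])
  have hPP : Pm u * Pm v = Pm w * Pm x := by
    have h0 : Polynomial.aeval γ (Pm u * Pm v - Pm w * Pm x) = 0 := by
      rw [map_sub, map_mul, map_mul, hPφ, hPφ, hPφ, hPφ, heq, sub_self]
    have hdeg' : (Pm u * Pm v - Pm w * Pm x).natDegree ≤ 2 * r := by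
      refine (Polynomial.natDegree_sub_le _ _).trans (max_le ?_ ?_) <;>
        refine Polynomial.natDegree_mul_le.trans ?_
      · have := add_le_add (hdegP u) (hdegP v); omega
      · have := add_le_add (hdegP w) (hdegP x); omega
    have := hmono _ hdeg' h0
    exact sub_eq_zero.mp this
  have E1 : u * v = w * x := by
    have := congrArg (fun Q => Polynomial.coeff Q 0) hPP
    simpa only [Polynomial.mul_coeff_zero, hcoeff0] using this
  have E2 : ((θ * u ^ q + u) * δ l) * v + u * ((θ * v ^ q + v) * δ l) + (u * v) * S
      = ((θ * w ^ q + w) * δ l) * x + w * ((θ * x ^ q + x) * δ l) + (w * x) * S := by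
    have := congrArg (fun Q => Polynomial.coeff Q l) hPP
    simpa only [hcoefflmul] using this
  have hkey : u ^ q * v + u * v ^ q = w ^ q * x + w * x ^ q := by
    have h3 : (θ * δ l) * (u ^ q * v + u * v ^ q) = (θ * δ l) * (w ^ q * x + w * x ^ q) := by
      linear_combination E2 - (2 * δ l + S) * E1
    exact mul_left_cancel₀ (mul_ne_zero hθ0 hδl0) h3
  have hprod : (u ^ q * v) * (u * v ^ q) = (w ^ q * x) * (w * x ^ q) := by
    have h1 : u ^ q * v * (u * v ^ q) = (u * v) ^ q * (u * v) := by ring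
    have h2 : w ^ q * x * (w * x ^ q) = (w * x) ^ q * (w * x) := by ring
    rw [h1, h2, E1]
  rcases aux_quad hkey hprod with hA | hA
  · -- w^q x = u^q v : u and w parallel
    have hwu : w ^ q * u = u ^ q * w := by
      have h5 : w ^ q * u * (v * x) = u ^ q * w * (v * x) := by
        linear_combination (u * v) * hA + (u ^ q * v) * E1
      exact mul_right_cancel₀ (mul_ne_zero hv hx) h5
    have hcq : (w * u⁻¹) ^ q = w * u⁻¹ := by
      rw [mul_pow, inv_pow]
      field_simp
      linear_combination hwu
    obtain ⟨c₀, hc₀⟩ := aux_fixed K M (w * u⁻¹) (by rw [hK]; exact hcq)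
    have hc00 : c₀ ≠ 0 := by
      intro h
      rw [h, map_zero] at hc₀
      exact hw (by field_simp at hc₀; rw [zero_mul] at hc₀; exact hc₀.symm)
    have hwc : c₀ • u = w := by
      rw [Algebra.smul_def, hc₀]
      field_simp
    have hmap0 : algebraMap K M c₀ ≠ 0 := fun h => hc00 ((map_eq_zero _).mp h)
    have hw' : w = algebraMap K M c₀ * u := by rw [← hwc, Algebra.smul_def]
    have hx' : algebraMap K M c₀ * x = v := by
      apply mul_left_cancel₀ hu
      linear_combination (-1 : M) * E1 - x * hw'
    have hxc : c₀⁻¹ • v = x := by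
      rw [Algebra.smul_def, map_inv₀, ← hx', inv_mul_cancel_left₀ hmap0]
    have h1 : Submodule.span K {φ w} = Submodule.span K {φ u} := by
      rw [← hwc, map_smul]
      exact Submodule.span_singleton_smul_eq (IsUnit.mk0 c₀ hc00) _
    have h2 : Submodule.span K {φ x} = Submodule.span K {φ v} := by
      rw [← hxc, map_smul]
      exact Submodule.span_singleton_smul_eq (IsUnit.mk0 _ (inv_ne_zero hc00)) _
    rw [h1, h2]
  · -- w^q x = u v^q : w parallel to v
    have hwv : w ^ q * v = v ^ q * w := by
      have h5 : w ^ q * v * (u * x) = v ^ q * w * (u * x) := by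
        linear_combination (u * v) * hA + (u * v ^ q) * E1
      exact mul_right_cancel₀ (mul_ne_zero hu hx) h5
    have hcq : (w * v⁻¹) ^ q = w * v⁻¹ := by
      rw [mul_pow, inv_pow]
      field_simp
      linear_combination hwv
    obtain ⟨c₀, hc₀⟩ := aux_fixed K M (w * v⁻¹) (by rw [hK]; exact hcq)
    have hc00 : c₀ ≠ 0 := by
      intro h
      rw [h, map_zero] at hc₀
      exact hw (by field_simp at hc₀; rw [zero_mul] at hc₀; exact hc₀.symm)
    have hwc : c₀ • v = w := by
      rw [Algebra.smul_def, hc₀]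
      field_simp
    have hmap0 : algebraMap K M c₀ ≠ 0 := fun h => hc00 ((map_eq_zero _).mp h)
    have hw' : w = algebraMap K M c₀ * v := by rw [← hwc, Algebra.smul_def]
    have hx' : algebraMap K M c₀ * x = u := by
      apply mul_left_cancel₀ hv
      linear_combination (-1 : M) * E1 - x * hw'
    have hxc : c₀⁻¹ • u = x := by
      rw [Algebra.smul_def, map_inv₀, ← hx', inv_mul_cancel_left₀ hmap0]
    have h1 : Submodule.span K {φ w} = Submodule.span K {φ v} := by
      rw [← hwc, map_smul]
      exact Submodule.span_singleton_smul_eq (IsUnit.mk0 c₀ hc00) _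
    have h2 : Submodule.span K {φ x} = Submodule.span K {φ u} := by
      rw [← hxc, map_smul]
      exact Submodule.span_singleton_smul_eq (IsUnit.mk0 _ (inv_ne_zero hc00)) _
    rw [h1, h2, Set.pair_comm]
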